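/- arXiv:1107.5980 — 2 statements merged into one kernel-verified Lean document; each statement's English description precedes it below -/
import Mathlib

section
/- For every n ∈ ℕ, the relation ≻dms is well-founded on the set of multisets of integers that have at most n elements and all of whose elements are nonnegative: there is no infinite sequence (S_k) of such multisets with S_k ≻dms S_{k+1} for all k. -/
/-- The maximum of a multiset of integers (0 for the empty multiset; only used on nonempty ones). -/
def mmax (S : Multiset ℤ) : ℤ := WithBot.unbotD 0 ((S.map (fun x => (x : WithBot ℤ))).sup)

/-- The minimum of a multiset of integers (0 for the empty multiset; only used on nonempty ones). -/
def mmin (S : Multiset ℤ) : ℤ := WithTop.untopD 0 ((S.map (fun x => (x : WithTop ℤ))).inf)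

/-- max order, weak: S ≿max T. -/
def geMax (S T : Multiset ℤ) : Prop := T = 0 ∨ (S ≠ 0 ∧ T ≠ 0 ∧ mmax S ≥ mmax T)

/-- max order, strict: S ≻max T. -/
def gtMax (S T : Multiset ℤ) : Prop := (S ≠ 0 ∧ T ≠ 0 ∧ mmax S > mmax T) ∨ (S ≠ 0 ∧ T = 0)

/-- min order, weak: S ≿min T. -/
def geMin (S T : Multiset ℤ) : Prop := S = 0 ∨ (S ≠ 0 ∧ T ≠ 0 ∧ mmin S ≥ mmin T)

/-- min order, strict: S ≻min T. -/
def gtMin (S T : Multiset ℤ) : Prop := (S ≠ 0 ∧ T ≠ 0 ∧ mmin S > mmin T) ∨ (S = 0 ∧ T ≠ 0)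

/-- multiset order, strict: S ≻ms T. -/
def gtMS (S T : Multiset ℤ) : Prop :=
  ∃ W U V : Multiset ℤ, U ≠ 0 ∧ S = W + U ∧ T = W + V ∧ gtMax U V

/-- multiset order, weak: S ≿ms T. -/
def geMS (S T : Multiset ℤ) : Prop := gtMS S T ∨ S = T

/-- dual multiset order, strict: S ≻dms T. -/
def gtDMS (S T : Multiset ℤ) : Prop :=
  ∃ W U V : Multiset ℤ, V ≠ 0 ∧ S = W + U ∧ T = W + V ∧ gtMin U V

/-- dual multiset order, weak: S ≿dms T. -/
def geDMS (S T : Multiset ℤ) : Prop := gtDMS S T ∨ S = T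


lemma add_ne_zero_left' {A B : Multiset ℤ} (hA : A ≠ 0) : A + B ≠ 0 := by
  intro h
  have := congrArg Multiset.card h
  simp at this
  exact hA this.1

lemma add_ne_zero_right' {A B : Multiset ℤ} (hB : B ≠ 0) : A + B ≠ 0 := by
  intro h
  have := congrArg Multiset.card h
  simp at this
  exact hB this.2

lemma winf_eq {S : Multiset ℤ} (h : S ≠ 0) :
    (S.map (fun x : ℤ => (x : WithTop ℤ))).inf = ((mmin S : ℤ) : WithTop ℤ) := by
  obtain ⟨x, hx⟩ := Multiset.exists_mem_of_ne_zero h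
  have hle : (S.map (fun x : ℤ => (x : WithTop ℤ))).inf ≤ (x : WithTop ℤ) :=
    Multiset.inf_le (Multiset.mem_map_of_mem _ hx)
  cases hw : (S.map (fun x : ℤ => (x : WithTop ℤ))).inf with
  | top => rw [hw] at hle; exact absurd hle (by simp)
  | coe a => simp [mmin, hw]

lemma mmin_le_of_mem {S : Multiset ℤ} {x : ℤ} (hx : x ∈ S) : mmin S ≤ x := by
  have hS : S ≠ 0 := by rintro rfl; exact absurd hx (Multiset.notMem_zero x)
  have hle : (S.map (fun x : ℤ => (x : WithTop ℤ))).inf ≤ (x : WithTop ℤ) :=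
    Multiset.inf_le (Multiset.mem_map_of_mem _ hx)
  rw [winf_eq hS] at hle
  exact_mod_cast hle

lemma mmin_mem {S : Multiset ℤ} (h : S ≠ 0) : mmin S ∈ S := by
  induction S using Multiset.induction_on with
  | empty => exact absurd rfl h
  | cons a s ih =>
    by_cases hs : s = 0
    · subst hs
      have : mmin (a ::ₘ 0) = a := by simp [mmin]
      rw [this]; exact Multiset.mem_cons_self a 0
    · have hcons : mmin (a ::ₘ s) = min a (mmin s) := by
        have h1 : ((a ::ₘ s).map (fun x : ℤ => (x : WithTop ℤ))).inf
            = (a : WithTop ℤ) ⊓ (s.map (fun x : ℤ => (x : WithTop ℤ))).inf := by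
          simp
        rw [winf_eq hs] at h1
        have h2 : ((a : WithTop ℤ) ⊓ ((mmin s : ℤ) : WithTop ℤ)) = ((min a (mmin s) : ℤ) : WithTop ℤ) := by
          exact_mod_cast rfl
        rw [h2] at h1
        rw [winf_eq (S := a ::ₘ s) (by simp)] at h1
        exact_mod_cast h1
      rw [hcons]
      rcases min_cases a (mmin s) with ⟨h1, _⟩ | ⟨h1, _⟩
      · rw [h1]; exact Multiset.mem_cons_self a s
      · rw [h1]; exact Multiset.mem_cons_of_mem (ih hs)

lemma mmin_add {A B : Multiset ℤ} (hA : A ≠ 0) (hB : B ≠ 0) :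
    mmin (A + B) = min (mmin A) (mmin B) := by
  have hAB : A + B ≠ 0 := add_ne_zero_left' hA
  have h1 : ((A + B).map (fun x : ℤ => (x : WithTop ℤ))).inf
      = (A.map (fun x : ℤ => (x : WithTop ℤ))).inf ⊓ (B.map (fun x : ℤ => (x : WithTop ℤ))).inf := by
    rw [Multiset.map_add, Multiset.inf_add]
  rw [winf_eq hAB, winf_eq hA, winf_eq hB] at h1
  exact_mod_cast h1

lemma gtDMS_ne_zero {S T : Multiset ℤ} (h : gtDMS S T) : T ≠ 0 := by
  obtain ⟨W, U, V, hV, _, hT, _⟩ := h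
  rw [hT]
  exact add_ne_zero_right' hV

lemma mmin_add_le_left {A B : Multiset ℤ} (hA : A ≠ 0) : mmin (A + B) ≤ mmin A := by
  by_cases hB : B = 0
  · simp [hB]
  · rw [mmin_add hA hB]; exact min_le_left _ _

lemma mmin_add_le_right {A B : Multiset ℤ} (hB : B ≠ 0) : mmin (A + B) ≤ mmin B := by
  by_cases hA : A = 0
  · simp [hA]
  · rw [mmin_add hA hB]; exact min_le_right _ _

lemma step_min {S T : Multiset ℤ} (hS : S ≠ 0) (h : gtDMS S T) : mmin T ≤ mmin S := by
  obtain ⟨W, U, V, hV, hSd, hTd, hUV⟩ := h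
  rcases hUV with ⟨hU, _, hmin⟩ | ⟨hU, _⟩
  · subst hSd; subst hTd
    by_cases hW : W = 0
    · simp only [hW, zero_add] at *
      exact le_of_lt hmin
    · rw [mmin_add hW hU, mmin_add hW hV]
      exact min_le_min le_rfl (le_of_lt hmin)
  · subst hU
    simp only [add_zero] at hSd
    subst hSd; subst hTd
    exact mmin_add_le_left hS

lemma key_counts {S T W U V : Multiset ℤ} (hV : V ≠ 0) (hSd : S = W + U) (hTd : T = W + V)
    (hUV : gtMin U V) {m : ℤ} (hmT : mmin T = m) :
    Multiset.count m U = 0 ∧ Multiset.count m S ≤ Multiset.count m T ∧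
      (Multiset.count m S = Multiset.count m T → Multiset.count m V = 0) := by
  have hmV : m ≤ mmin V := by
    rw [← hmT, hTd]; exact mmin_add_le_right hV
  have hUc : Multiset.count m U = 0 := by
    rcases hUV with ⟨hU, _, hmin⟩ | ⟨hU, _⟩
    · rw [Multiset.count_eq_zero]
      intro hm
      exact absurd (mmin_le_of_mem hm) (not_le.2 (lt_of_le_of_lt hmV hmin))
    · simp [hU]
  refine ⟨hUc, ?_, ?_⟩ <;>
    rw [hSd, hTd, Multiset.count_add, Multiset.count_add, hUc] <;> omega

lemma ev_const (μ : ℕ → ℕ) (h : ∀ k, μ (k + 1) ≤ μ k) :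
    ∃ k0, ∀ j, k0 ≤ j → μ j = μ k0 := by
  have anti : ∀ a d, μ (a + d) ≤ μ a := by
    intro a d
    induction d with
    | zero => simp
    | succ d ih => exact le_trans (h (a + d)) ih
  have hne : (Set.range μ).Nonempty := ⟨μ 0, ⟨0, rfl⟩⟩
  obtain ⟨k0, hk0⟩ := Nat.sInf_mem hne
  refine ⟨k0, fun j hj => ?_⟩
  have h1 : μ j ≤ μ k0 := by
    have := anti k0 (j - k0)
    rwa [Nat.add_sub_cancel' hj] at this
  have h2 : sInf (Set.range μ) ≤ μ j := Nat.sInf_le ⟨j, rfl⟩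
  omega

lemma ev_const_mono (ν : ℕ → ℕ) (N : ℕ) (h : ∀ k, ν k ≤ ν (k + 1)) (hb : ∀ k, ν k ≤ N) :
    ∃ k0, ∀ j, k0 ≤ j → ν j = ν k0 := by
  obtain ⟨k0, hk0⟩ := ev_const (fun k => N - ν k) (fun k => Nat.sub_le_sub_left (h k) N)
  refine ⟨k0, fun j hj => ?_⟩
  have h1 := hk0 j hj
  have h2 := hb j
  have h3 := hb k0
  omega

lemma card_filter_ne (s : Multiset ℤ) (m : ℤ) :
    Multiset.card (s.filter (fun x => x ≠ m)) + Multiset.count m s = Multiset.card s := by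
  have h := Multiset.filter_add_not (fun x => x ≠ m) s
  have h2 : Multiset.count m s = Multiset.card (s.filter (fun x => ¬ x ≠ m)) := by
    rw [Multiset.count_eq_card_filter_eq]
    congr 1
    apply Multiset.filter_congr
    intro x _
    constructor <;> intro <;> simp_all
  rw [h2, ← Multiset.card_add, h]

lemma no_chain : ∀ n : ℕ, ∀ S : ℕ → Multiset ℤ,
    (∀ k, (S k).card ≤ n ∧ ∀ x ∈ S k, 0 ≤ x) → (∀ k, gtDMS (S k) (S (k + 1))) → False := by
  intro n
  induction n with
  | zero =>
    intro S hb hlt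
    have h1 : S 1 ≠ 0 := gtDMS_ne_zero (hlt 0)
    exact h1 (Multiset.card_eq_zero.mp (Nat.le_zero.mp (hb 1).1))
  | succ n ih =>
    intro S hb hlt
    set T : ℕ → Multiset ℤ := fun k => S (k + 1) with hTdef
    have hTne : ∀ k, T k ≠ 0 := fun k => gtDMS_ne_zero (hlt k)
    have hTlt : ∀ k, gtDMS (T k) (T (k + 1)) := fun k => hlt (k + 1)
    have hTb : ∀ k, (T k).card ≤ n + 1 ∧ ∀ x ∈ T k, 0 ≤ x := fun k => hb (k + 1)
    have hnn : ∀ k, 0 ≤ mmin (T k) := fun k => (hTb k).2 _ (mmin_mem (hTne k))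
    have hmono : ∀ k, mmin (T (k + 1)) ≤ mmin (T k) := fun k => step_min (hTne k) (hTlt k)
    obtain ⟨k0, hk0⟩ := ev_const (fun k => (mmin (T k)).toNat)
      (fun k => Int.toNat_le_toNat (hmono k))
    set m : ℤ := mmin (T k0) with hmdef
    have hm : ∀ j, k0 ≤ j → mmin (T j) = m := by
      intro j hj
      have h1 := hk0 j hj
      have e1 := Int.toNat_of_nonneg (hnn j)
      have e2 := Int.toNat_of_nonneg (hnn k0)
      omega
    have hν : ∀ i, Multiset.count m (T (k0 + i)) ≤ Multiset.count m (T (k0 + i + 1)) := by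
      intro i
      obtain ⟨W, U, V, hV, hSd, hTd, hUV⟩ := hTlt (k0 + i)
      exact (key_counts hV hSd hTd hUV (hm (k0 + i + 1) (by omega))).2.1
    obtain ⟨j1, hj1⟩ := ev_const_mono (fun i => Multiset.count m (T (k0 + i))) (n + 1)
      (fun i => hν i) (fun i => le_trans (Multiset.count_le_card m _) (hTb (k0 + i)).1)
    set base := k0 + j1 with hbase
    have hc : ∀ j, base ≤ j → Multiset.count m (T j) = Multiset.count m (T base) := by
      intro j hj
      have h1 := hj1 (j - k0) (by omega)
      rwa [Nat.add_sub_cancel' (by omega : k0 ≤ j)] at h1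
    have hcpos : 0 < Multiset.count m (T base) := by
      have : m ∈ T base := by
        rw [← hm base (by omega)]
        exact mmin_mem (hTne base)
      exact Multiset.count_pos.mpr this
    set R : ℕ → Multiset ℤ := fun i => (T (base + i)).filter (fun x => x ≠ m) with hRdef
    apply ih R
    · intro i
      constructor
      · have h1 := card_filter_ne (T (base + i)) m
        have h2 := (hTb (base + i)).1
        have h3 : Multiset.count m (T (base + i)) = Multiset.count m (T base) :=
          hc (base + i) (Nat.le_add_right _ _)
        simp only [hRdef]
        omega
      · intro x hx
        exact (hTb (base + i)).2 x (Multiset.mem_filter.mp hx).1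
    · intro i
      obtain ⟨W, U, V, hV, hSd, hTd, hUV⟩ := hTlt (base + i)
      have hkey := key_counts hV hSd hTd hUV (hm (base + i + 1) (by omega))
      have heq : Multiset.count m (T (base + i)) = Multiset.count m (T (base + i + 1)) := by
        rw [hc (base + i) (by omega), hc (base + i + 1) (by omega)]
      have hVc : Multiset.count m V = 0 := hkey.2.2 heq
      have hUc : Multiset.count m U = 0 := hkey.1
      have hUf : U.filter (fun x => x ≠ m) = U :=
        Multiset.filter_eq_self.mpr (fun x hx => by
          rintro rfl; exact absurd hx (Multiset.count_eq_zero.mp hUc))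
      have hVf : V.filter (fun x => x ≠ m) = V :=
        Multiset.filter_eq_self.mpr (fun x hx => by
          rintro rfl; exact absurd hx (Multiset.count_eq_zero.mp hVc))
      refine ⟨W.filter (fun x => x ≠ m), U, V, hV, ?_, ?_, hUV⟩
      · show (T (base + i)).filter (fun x => x ≠ m) = _
        rw [hSd, Multiset.filter_add, hUf]
      · show (T (base + i + 1)).filter (fun x => x ≠ m) = _
        rw [hTd, Multiset.filter_add, hVf]

/-- ≻dms is well-founded on the multisets of integers with at most `n` elements
all of whose elements are nonnegative. -/
theorem gtDMS_wellFounded (n : ℕ) :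
    ¬ ∃ S : ℕ → Multiset ℤ,
        (∀ k, (S k).card ≤ n ∧ ∀ x ∈ S k, 0 ≤ x) ∧
        (∀ k, gtDMS (S k) (S (k + 1))) := by
  rintro ⟨S, hb, hlt⟩
  exact no_chain n S hb hlt
end

section
/- Let ≿ denote any one of the four relations ≿max, ≿min, ≿ms, ≿dms, and ≻ the corresponding strict relation ≻max, ≻min, ≻ms, ≻dms. Let H, H', L, L' be nonempty multisets of integers, and for nonempty H and L define H ⊖ L to be the image of H under x ↦ x − min L. If H ≿ H' and L' ≿min L, then (H ⊖ L) ≿ (H' ⊖ L'). If in addition H ≻ H', or L' ≻min L, then (H ⊖ L) ≻ (H' ⊖ L'). -/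
lemma mmax_def' (S : Multiset ℤ) :
    mmax S = ((S.map (fun x : ℤ => (x : WithBot ℤ))).sup).unbotD 0 := by
  unfold mmax
  congr 2
  simp [Multiset.bind]
  induction S using Multiset.induction with
  | empty => simp
  | cons a S ih => simp [ih]

lemma mmin_def' (S : Multiset ℤ) :
    mmin S = ((S.map (fun x : ℤ => (x : WithTop ℤ))).inf).untopD 0 := by
  unfold mmin
  congr 2
  simp [Multiset.bind]
  induction S using Multiset.induction with
  | empty => simp
  | cons a S ih => simp [ih]

lemma mmax_eq (S : Multiset ℤ) (a : ℤ) (ha : a ∈ S) (h : ∀ b ∈ S, b ≤ a) : mmax S = a := by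
  have : (S.map (fun x : ℤ => (x : WithBot ℤ))).sup = (a : WithBot ℤ) := by
    apply le_antisymm
    · apply Multiset.sup_le.2
      intro b hb
      obtain ⟨x, hx, rfl⟩ := Multiset.mem_map.1 hb
      exact_mod_cast h x hx
    · exact Multiset.le_sup (Multiset.mem_map_of_mem (fun x : ℤ => (x : WithBot ℤ)) ha)
  rw [mmax_def', this, WithBot.unbotD_coe]

lemma mmin_eq (S : Multiset ℤ) (a : ℤ) (ha : a ∈ S) (h : ∀ b ∈ S, a ≤ b) : mmin S = a := by
  have : (S.map (fun x : ℤ => (x : WithTop ℤ))).inf = (a : WithTop ℤ) := by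
    apply le_antisymm
    · exact Multiset.inf_le (Multiset.mem_map_of_mem (fun x : ℤ => (x : WithTop ℤ)) ha)
    · apply Multiset.le_inf.2
      intro b hb
      obtain ⟨x, hx, rfl⟩ := Multiset.mem_map.1 hb
      exact_mod_cast h x hx
  rw [mmin_def', this, WithTop.untopD_coe]

lemma exists_max (S : Multiset ℤ) (h : S ≠ 0) : ∃ a ∈ S, ∀ b ∈ S, b ≤ a := by
  induction S using Multiset.induction with
  | empty => simp at h
  | cons a S ih =>
    rcases eq_or_ne S 0 with rfl | hS
    · exact ⟨a, by simp⟩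
    · obtain ⟨m, hm, hmax⟩ := ih hS
      refine ⟨max a m, ?_, ?_⟩
      · rcases le_total a m with h' | h'
        · simp [max_eq_right h', Multiset.mem_cons_of_mem hm]
        · simp [max_eq_left h']
      · intro b hb
        rcases Multiset.mem_cons.1 hb with rfl | hb
        · exact le_max_left _ _
        · exact le_trans (hmax b hb) (le_max_right _ _)

lemma exists_min (S : Multiset ℤ) (h : S ≠ 0) : ∃ a ∈ S, ∀ b ∈ S, a ≤ b := by
  induction S using Multiset.induction with
  | empty => simp at h
  | cons a S ih =>
    rcases eq_or_ne S 0 with rfl | hS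
    · exact ⟨a, by simp⟩
    · obtain ⟨m, hm, hmin⟩ := ih hS
      refine ⟨min a m, ?_, ?_⟩
      · rcases le_total a m with h' | h'
        · simp [min_eq_left h']
        · simp [min_eq_right h', Multiset.mem_cons_of_mem hm]
      · intro b hb
        rcases Multiset.mem_cons.1 hb with rfl | hb
        · exact min_le_left _ _
        · exact le_trans (min_le_right _ _) (hmin b hb)

lemma mmax_spec (S : Multiset ℤ) (h : S ≠ 0) : mmax S ∈ S ∧ ∀ b ∈ S, b ≤ mmax S := by
  obtain ⟨a, ha, hmax⟩ := exists_max S h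
  rw [mmax_eq S a ha hmax]
  exact ⟨ha, hmax⟩

lemma mmin_spec (S : Multiset ℤ) (h : S ≠ 0) : mmin S ∈ S ∧ ∀ b ∈ S, mmin S ≤ b := by
  obtain ⟨a, ha, hmin⟩ := exists_min S h
  rw [mmin_eq S a ha hmin]
  exact ⟨ha, hmin⟩

lemma mmax_map_sub (S : Multiset ℤ) (h : S ≠ 0) (c : ℤ) :
    mmax (S.map (fun x => x - c)) = mmax S - c := by
  obtain ⟨hm, hle⟩ := mmax_spec S h
  apply mmax_eq
  · exact Multiset.mem_map_of_mem _ hm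
  · intro b hb
    obtain ⟨x, hx, rfl⟩ := Multiset.mem_map.1 hb
    have := hle x hx
    omega

lemma mmin_map_sub (S : Multiset ℤ) (h : S ≠ 0) (c : ℤ) :
    mmin (S.map (fun x => x - c)) = mmin S - c := by
  obtain ⟨hm, hle⟩ := mmin_spec S h
  apply mmin_eq
  · exact Multiset.mem_map_of_mem _ hm
  · intro b hb
    obtain ⟨x, hx, rfl⟩ := Multiset.mem_map.1 hb
    have := hle x hx
    omega

lemma map_sub_ne_zero {S : Multiset ℤ} (h : S ≠ 0) (c : ℤ) :
    S.map (fun x => x - c) ≠ 0 := by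
  simpa [Multiset.map_eq_zero] using h

lemma gtMS_mmax_ge {S T : Multiset ℤ} (hS : S ≠ 0) (hT : T ≠ 0) (h : gtMS S T) :
    mmax S ≥ mmax T := by
  obtain ⟨W, U, V, hU, rfl, rfl, hUV⟩ := h
  obtain ⟨hmemT, _⟩ := mmax_spec _ hT
  have hleS := (mmax_spec _ hS).2
  rcases Multiset.mem_add.1 hmemT with hw | hv
  · exact hleS _ (Multiset.mem_add.2 (Or.inl hw))
  · rcases hUV with ⟨_, hV, hlt⟩ | ⟨_, rfl⟩
    · have h1 : mmax (W + V) ≤ mmax V := (mmax_spec V hV).2 _ hv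
      have h2 : mmax U ≤ mmax (W + U) :=
        hleS _ (Multiset.mem_add.2 (Or.inr (mmax_spec U hU).1))
      omega
    · simp at hv

lemma gtDMS_mmin_ge {S T : Multiset ℤ} (hS : S ≠ 0) (hT : T ≠ 0) (h : gtDMS S T) :
    mmin S ≥ mmin T := by
  obtain ⟨W, U, V, hV, rfl, rfl, hUV⟩ := h
  obtain ⟨hmemS, _⟩ := mmin_spec _ hS
  have hleT := (mmin_spec _ hT).2
  rcases Multiset.mem_add.1 hmemS with hw | hu
  · exact hleT _ (Multiset.mem_add.2 (Or.inl hw))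
  · rcases hUV with ⟨hU, _, hlt⟩ | ⟨rfl, _⟩
    · have h1 : mmin U ≤ mmin (W + U) := (mmin_spec U hU).2 _ hu
      have h2 : mmin (W + V) ≤ mmin V :=
        hleT _ (Multiset.mem_add.2 (Or.inr (mmin_spec V hV).1))
      omega
    · simp at hu

lemma gtMS_map_sub {S T : Multiset ℤ} (c : ℤ) (h : gtMS S T) :
    gtMS (S.map (fun x => x - c)) (T.map (fun x => x - c)) := by
  obtain ⟨W, U, V, hU, rfl, rfl, hUV⟩ := h
  refine ⟨W.map (fun x => x - c), U.map (fun x => x - c), V.map (fun x => x - c),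
    map_sub_ne_zero hU c, by rw [Multiset.map_add], by rw [Multiset.map_add], ?_⟩
  rcases hUV with ⟨_, hV, hlt⟩ | ⟨_, rfl⟩
  · exact Or.inl ⟨map_sub_ne_zero hU c, map_sub_ne_zero hV c, by
      rw [mmax_map_sub U hU, mmax_map_sub V hV]; omega⟩
  · exact Or.inr ⟨map_sub_ne_zero hU c, by simp⟩

lemma gtDMS_map_sub {S T : Multiset ℤ} (c : ℤ) (h : gtDMS S T) :
    gtDMS (S.map (fun x => x - c)) (T.map (fun x => x - c)) := by
  obtain ⟨W, U, V, hV, rfl, rfl, hUV⟩ := h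
  refine ⟨W.map (fun x => x - c), U.map (fun x => x - c), V.map (fun x => x - c),
    map_sub_ne_zero hV c, by rw [Multiset.map_add], by rw [Multiset.map_add], ?_⟩
  rcases hUV with ⟨hU, _, hlt⟩ | ⟨rfl, _⟩
  · exact Or.inl ⟨map_sub_ne_zero hU c, map_sub_ne_zero hV c, by
      rw [mmin_map_sub U hU, mmin_map_sub V hV]; omega⟩
  · exact Or.inr ⟨by simp, map_sub_ne_zero hV c⟩

/-- Decreasing difference, where the low sets are of type `min` and the difference
`H ⊖ L` is the image of `H` under `x ↦ x - min L`; `≿`/`≻` is any one of the four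
multiset orders. -/
theorem diff_decreasing_lowMin (ge gt : Multiset ℤ → Multiset ℤ → Prop)
    (hrel : (ge = geMax ∧ gt = gtMax) ∨ (ge = geMin ∧ gt = gtMin) ∨
            (ge = geMS ∧ gt = gtMS) ∨ (ge = geDMS ∧ gt = gtDMS))
    (H H' L L' : Multiset ℤ)
    (hH : H ≠ 0) (hH' : H' ≠ 0) (hL : L ≠ 0) (hL' : L' ≠ 0)
    (h1 : ge H H') (h2 : geMin L' L) :
    ge (H.map (fun x => x - mmin L)) (H'.map (fun x => x - mmin L')) ∧
    ((gt H H' ∨ gtMin L' L) →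
      gt (H.map (fun x => x - mmin L)) (H'.map (fun x => x - mmin L'))) := by
  set c := mmin L with hc
  set c' := mmin L' with hc'
  have hcc : c ≤ c' := by
    rcases h2 with h | ⟨_, _, h⟩
    · exact absurd h hL'
    · exact h
  have hM : H.map (fun x => x - c) ≠ 0 := map_sub_ne_zero hH c
  have hM' : H'.map (fun x => x - c') ≠ 0 := map_sub_ne_zero hH' c'
  have hmaxH := mmax_map_sub H hH c
  have hmaxH' := mmax_map_sub H' hH' c'
  have hminH := mmin_map_sub H hH c
  have hminH' := mmin_map_sub H' hH' c'
  -- extract c' > c from gtMin L' L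
  have hstrictL : gtMin L' L → c' > c := by
    rintro (⟨_, _, h⟩ | ⟨h, _⟩)
    · exact h
    · exact absurd h hL'
  rcases hrel with ⟨rfl, rfl⟩ | ⟨rfl, rfl⟩ | ⟨rfl, rfl⟩ | ⟨rfl, rfl⟩
  · -- geMax / gtMax
    have hm : mmax H ≥ mmax H' := by
      rcases h1 with h | ⟨_, _, h⟩
      · exact absurd h hH'
      · exact h
    constructor
    · exact Or.inr ⟨hM, hM', by omega⟩
    · rintro (h | h)
      · rcases h with ⟨_, _, h⟩ | ⟨_, h⟩
        · exact Or.inl ⟨hM, hM', by omega⟩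
        · exact absurd h hH'
      · have := hstrictL h
        exact Or.inl ⟨hM, hM', by omega⟩
  · -- geMin / gtMin
    have hm : mmin H ≥ mmin H' := by
      rcases h1 with h | ⟨_, _, h⟩
      · exact absurd h hH
      · exact h
    constructor
    · exact Or.inr ⟨hM, hM', by omega⟩
    · rintro (h | h)
      · rcases h with ⟨_, _, h⟩ | ⟨h, _⟩
        · exact Or.inl ⟨hM, hM', by omega⟩
        · exact absurd h hH
      · have := hstrictL h
        exact Or.inl ⟨hM, hM', by omega⟩
  · -- geMS / gtMS
    have hm : mmax H ≥ mmax H' := by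
      rcases h1 with h | rfl
      · exact gtMS_mmax_ge hH hH' h
      · exact le_refl _
    rcases eq_or_lt_of_le hcc with heq | hlt
    · rw [← heq]
      constructor
      · rcases h1 with h | rfl
        · exact Or.inl (gtMS_map_sub c h)
        · exact Or.inr rfl
      · rintro (h | h)
        · exact gtMS_map_sub c h
        · have := hstrictL h; omega
      
    · have hstrict : gtMS (H.map (fun x => x - c)) (H'.map (fun x => x - c')) := by
        refine ⟨0, H.map (fun x => x - c), H'.map (fun x => x - c'), hM, by simp, by simp, ?_⟩
        exact Or.inl ⟨hM, hM', by omega⟩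
      exact ⟨Or.inl hstrict, fun _ => hstrict⟩
  · -- geDMS / gtDMS
    have hm : mmin H ≥ mmin H' := by
      rcases h1 with h | rfl
      · exact gtDMS_mmin_ge hH hH' h
      · exact le_refl _
    rcases eq_or_lt_of_le hcc with heq | hlt
    · rw [← heq]
      constructor
      · rcases h1 with h | rfl
        · exact Or.inl (gtDMS_map_sub c h)
        · exact Or.inr rfl
      · rintro (h | h)
        · exact gtDMS_map_sub c h
        · have := hstrictL h; omega
    · have hstrict : gtDMS (H.map (fun x => x - c)) (H'.map (fun x => x - c')) := by
        refine ⟨0, H.map (fun x => x - c), H'.map (fun x => x - c'), hM', by simp, by simp, ?_⟩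
        exact Or.inl ⟨hM, hM', by omega⟩
      exact ⟨Or.inl hstrict, fun _ => hstrict⟩
end
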